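/- Let α be an algebraic integer, p a rational prime, x > 0, and let L be the largest natural number with p^L ≤ x. If n is the number of prime ideals 𝔭 of the ring of integers of ℚ(α) lying above p with N(𝔭) ≤ x, then p^n divides N_{ℚ(α)/ℚ}(α^{p^{L!}} - α) (in particular p^n ≤ |N(α)|·|N(α^{p^{L!}-1} - 1)| when α is not a root of this expression's vanishing). -/

import Mathlib

set_option maxHeartbeats 1000000
set_option synthInstance.maxHeartbeats 400000
open NumberField

lemma stmt5_mem (K : Type*) [Field K] [NumberField K] (α : 𝓞 K)
    (p : ℕ) (hp : p.Prime) (x : ℝ)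
    (L : ℕ) (hL2 : ∀ m : ℕ, (p : ℝ) ^ m ≤ x → m ≤ L)
    (𝔭 : Ideal (𝓞 K)) (hpr : 𝔭.IsPrime) (hmem : (p : 𝓞 K) ∈ 𝔭)
    (hle : (Ideal.absNorm 𝔭 : ℝ) ≤ x) :
    α ^ p ^ (Nat.factorial L) - α ∈ 𝔭 := by
  have hp0 : (p : 𝓞 K) ≠ 0 := Nat.cast_ne_zero.mpr hp.pos.ne'
  have hne : 𝔭 ≠ ⊥ := fun h => hp0 (by simpa [h] using hmem)
  haveI := Ideal.IsPrime.isMaximal hpr hne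
  letI : Field (𝓞 K ⧸ 𝔭) := Ideal.Quotient.field 𝔭
  haveI := @Fintype.ofFinite _ (Ideal.finiteQuotientOfFreeOfNeBot 𝔭 hne)
  have hcard : Fintype.card (𝓞 K ⧸ 𝔭) = Ideal.absNorm 𝔭 := by
    rw [Ideal.absNorm_apply, Submodule.cardQuot_apply, Nat.card_eq_fintype_card]
  have hpzero : ((p : ℕ) : 𝓞 K ⧸ 𝔭) = 0 := by
    rw [← map_natCast (Ideal.Quotient.mk 𝔭)]
    exact Ideal.Quotient.eq_zero_iff_mem.mpr hmem
  have hchar : ringChar (𝓞 K ⧸ 𝔭) = p := by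
    rcases (hp.eq_one_or_self_of_dvd _ (ringChar.dvd hpzero)) with h | h
    · exact absurd h (CharP.ringChar_ne_one)
    · exact h
  haveI : CharP (𝓞 K ⧸ 𝔭) p := hchar ▸ ringChar.charP _
  obtain ⟨f, -, hf⟩ := FiniteField.card (𝓞 K ⧸ 𝔭) p
  have hfL : (f : ℕ) ≤ L := by
    apply hL2
    calc ((p:ℝ)) ^ (f:ℕ) = (Ideal.absNorm 𝔭 : ℝ) := by
          rw [← hcard, hf]; push_cast; ring
      _ ≤ x := hle
  obtain ⟨m, hm⟩ : (f : ℕ) ∣ L.factorial := Nat.dvd_factorial f.pos hfL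
  have key : (Ideal.Quotient.mk 𝔭) (α ^ p ^ L.factorial - α) = 0 := by
    rw [map_sub, map_pow, hm, pow_mul, ← hf, FiniteField.pow_card_pow, sub_self]
  exact Ideal.Quotient.eq_zero_iff_mem.mp key

theorem stmt_5 (K : Type*) [Field K] [NumberField K] (α : 𝓞 K)
    (p : ℕ) (hp : p.Prime) (x : ℝ) (hx : 0 < x)
    (L : ℕ) (hL1 : (p : ℝ) ^ L ≤ x) (hL2 : ∀ m : ℕ, (p : ℝ) ^ m ≤ x → m ≤ L) :
    (p : ℤ) ^ ({𝔭 : Ideal (𝓞 K) | 𝔭.IsPrime ∧ (p : 𝓞 K) ∈ 𝔭 ∧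
          (Ideal.absNorm 𝔭 : ℝ) ≤ x}.ncard)
        ∣ Algebra.norm ℤ (α ^ p ^ (Nat.factorial L) - α) ∧
    (Algebra.norm ℤ (α ^ p ^ (Nat.factorial L) - α) ≠ 0 →
      (p : ℤ) ^ ({𝔭 : Ideal (𝓞 K) | 𝔭.IsPrime ∧ (p : 𝓞 K) ∈ 𝔭 ∧
          (Ideal.absNorm 𝔭 : ℝ) ≤ x}.ncard)
        ≤ |Algebra.norm ℤ α| * |Algebra.norm ℤ (α ^ (p ^ (Nat.factorial L) - 1) - 1)|) := by
  set S : Set (Ideal (𝓞 K)) := {𝔭 : Ideal (𝓞 K) | 𝔭.IsPrime ∧ (p : 𝓞 K) ∈ 𝔭 ∧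
      (Ideal.absNorm 𝔭 : ℝ) ≤ x} with hS
  set β : 𝓞 K := α ^ p ^ (Nat.factorial L) - α with hβ
  have hSfin : S.Finite := by
    apply (Ideal.finite_setOf_absNorm_le ⌈x⌉₊).subset
    rintro 𝔭 ⟨-, -, h⟩
    have : (Ideal.absNorm 𝔭 : ℝ) ≤ (⌈x⌉₊ : ℝ) := h.trans (Nat.le_ceil x)
    exact_mod_cast this
  lift S to Finset (Ideal (𝓞 K)) using hSfin with s hs
  have hmem : ∀ 𝔭 ∈ s, β ∈ 𝔭 := by
    intro 𝔭 h𝔭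
    have : 𝔭 ∈ (s : Set (Ideal (𝓞 K))) := h𝔭
    rw [hs] at this
    obtain ⟨h1, h2, h3⟩ := this
    exact stmt5_mem K α p hp x L hL2 𝔭 h1 h2 h3
  have hmax : ∀ 𝔭 ∈ s, 𝔭.IsMaximal := by
    intro 𝔭 h𝔭
    have : 𝔭 ∈ (s : Set (Ideal (𝓞 K))) := h𝔭
    rw [hs] at this
    obtain ⟨h1, h2, -⟩ := this
    have hp0 : (p : 𝓞 K) ≠ 0 := Nat.cast_ne_zero.mpr hp.pos.ne'
    exact Ideal.IsPrime.isMaximal h1 (fun h => hp0 (by simpa [h] using h2))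
  -- product of primes divides span β
  have hproddvd : (∏ 𝔭 ∈ s, 𝔭) ∣ Ideal.span {β} := by
    apply Finset.prod_dvd_of_coprime
    · intro 𝔭 h𝔭 𝔮 h𝔮 hne
      exact Ideal.isCoprime_iff_sup_eq.mpr
        ((hmax 𝔭 h𝔭).coprime_of_ne (hmax 𝔮 h𝔮) hne)
    · intro 𝔭 h𝔭
      exact Ideal.dvd_iff_le.mpr ((Ideal.span_singleton_le_iff_mem _).mpr (hmem 𝔭 h𝔭))
  have hnormdvd : Ideal.absNorm (∏ 𝔭 ∈ s, 𝔭) ∣ (Algebra.norm ℤ β).natAbs := by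
    rw [← Ideal.absNorm_span_singleton]
    exact Ideal.absNorm_dvd_absNorm_of_le (Ideal.le_of_dvd hproddvd)
  have hpn : p ^ s.card ∣ Ideal.absNorm (∏ 𝔭 ∈ s, 𝔭) := by
    rw [map_prod]
    calc p ^ s.card = ∏ _𝔭 ∈ s, p := by rw [Finset.prod_const]
    _ ∣ ∏ 𝔭 ∈ s, Ideal.absNorm 𝔭 := by
        apply Finset.prod_dvd_prod_of_dvd
        intro 𝔭 h𝔭
        have h𝔭' : 𝔭 ∈ (s : Set (Ideal (𝓞 K))) := h𝔭
        rw [hs] at h𝔭'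
        obtain ⟨h1, h2, -⟩ := h𝔭'
        have hdp : Ideal.absNorm 𝔭 ∣ p ^ Fintype.card (Module.Free.ChooseBasisIndex ℤ (𝓞 K)) := by
          have := Ideal.absNorm_dvd_norm_of_mem h2
          have hcast : (p : 𝓞 K) = algebraMap ℤ (𝓞 K) (p : ℤ) := by push_cast; ring
          rw [hcast, Algebra.norm_algebraMap_of_basis (Module.Free.chooseBasis ℤ (𝓞 K))] at this
          exact_mod_cast this
        obtain ⟨i, hi, hieq⟩ := (Nat.dvd_prime_pow hp).mp hdp
        have hi0 : i ≠ 0 := by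
          rintro rfl
          rw [pow_zero] at hieq
          exact h1.ne_top (Ideal.absNorm_eq_one_iff.mp hieq)
        rw [hieq]
        exact dvd_pow_self p hi0
  have hcount : S.ncard = s.card := by rw [← hs, Set.ncard_coe_finset]
  have hmain : (p : ℤ) ^ s.card ∣ Algebra.norm ℤ β := by
    have : p ^ s.card ∣ (Algebra.norm ℤ β).natAbs := hpn.trans hnormdvd
    have h2 := Int.dvd_natAbs.mp (Int.natCast_dvd_natCast.mpr this)
    rwa [Nat.cast_pow] at h2
  have hfact : β = α * (α ^ (p ^ L.factorial - 1) - 1) := by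
    have h1 : 1 ≤ p ^ L.factorial := Nat.one_le_pow _ _ hp.pos
    have : α ^ p ^ L.factorial = α ^ (p ^ L.factorial - 1) * α := by
      rw [← pow_succ, Nat.sub_add_cancel h1]
    rw [show β = α ^ p ^ L.factorial - α from rfl, this]; ring
  constructor
  · rw [hS, hcount]; exact hmain
  · intro hne0
    rw [hS, hcount]
    have habs : (p:ℤ) ^ s.card ∣ |Algebra.norm ℤ β| := (dvd_abs _ _).mpr hmain
    have := Int.le_of_dvd (abs_pos.mpr hne0) habs
    calc (p:ℤ) ^ s.card ≤ |Algebra.norm ℤ β| := this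
      _ = |Algebra.norm ℤ α| * |Algebra.norm ℤ (α ^ (p ^ L.factorial - 1) - 1)| := by
          rw [hfact, map_mul, abs_mul]
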